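/- Let G be a finite simple graph with m edges, n vertices, and π_3(G) copies of P_3. Under a uniform random c-coloring F, for distinct colors i ≠ j, the variance of M^{i,j}, the number of edges with one endpoint colored i and the other colored j, equals 2m (c_i c_j / n^{\underline{2}})(1 - 2m c_i c_j / n^{\underline{2}}) + 2[ ((c_i c_j^{\underline{2}} + c_i^{\underline{2}} c_j)/n^{\underline{3}} - 4 c_i^{\underline{2}} c_j^{\underline{2}}/n^{\underline{4}}) π_3(G) + 4 (c_i^{\underline{2}} c_j^{\underline{2}}/n^{\underline{4}}) (m choose 2) ]. -/

import Mathlib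

open Finset

/-- The set of `c`-colorings of `V`. -/
def colorings (V : Type) [Fintype V] [DecidableEq V] (s : ℕ) (c : Fin s → ℕ) :
    Finset (V → Fin s) :=
  Finset.univ.filter fun f =>
    ∀ i, (Finset.univ.filter fun v => f v = i).card = c i

namespace VarBi

variable {V : Type} [Fintype V] [DecidableEq V] {s : ℕ} {c : Fin s → ℕ}

lemma mem_colorings {f : V → Fin s} :
    f ∈ colorings V s c ↔ ∀ i, (univ.filter fun v => f v = i).card = c i := by
  simp [colorings]

lemma comp_perm_mem (σ : Equiv.Perm V) {f : V → Fin s} (hf : f ∈ colorings V s c) :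
    (f ∘ σ) ∈ colorings V s c := by
  rw [mem_colorings] at hf ⊢
  intro i
  rw [← hf i]
  apply Finset.card_bij (fun v _ => σ v)
  · intro a ha
    simp only [mem_filter, mem_univ, true_and, Function.comp_apply] at ha ⊢
    exact ha
  · intro a _ b _ h; exact σ.injective h
  · intro b hb
    simp only [mem_filter, mem_univ, true_and, Function.comp_apply] at hb ⊢
    exact ⟨σ.symm b, by simpa using hb, by simp⟩

lemma exists_perm_tuple {k : ℕ} {v w : Fin k → V} (hv : Function.Injective v)
    (hw : Function.Injective w) : ∃ σ : Equiv.Perm V, ∀ t, σ (v t) = w t := by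
  classical
  let e : {x // x ∈ Set.range v} ≃ {x // x ∈ Set.range w} :=
    (Equiv.ofInjective v hv).symm.trans (Equiv.ofInjective w hw)
  refine ⟨e.extendSubtype, fun t => ?_⟩
  rw [Equiv.extendSubtype_apply_of_mem e (v t) ⟨t, rfl⟩]
  have h1 : (Equiv.ofInjective v hv).symm ⟨v t, ⟨t, rfl⟩⟩ = t := by
    rw [Equiv.symm_apply_eq, Equiv.ofInjective_apply]
  show ((Equiv.ofInjective w hw) ((Equiv.ofInjective v hv).symm ⟨v t, ⟨t, rfl⟩⟩) : V) = w t
  rw [h1, Equiv.ofInjective_apply]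

lemma count_tuple_eq {k : ℕ} {v w : Fin k → V} (hv : Function.Injective v)
    (hw : Function.Injective w) (a : Fin k → Fin s) :
    ((colorings V s c).filter fun f => ∀ t, f (v t) = a t).card
      = ((colorings V s c).filter fun f => ∀ t, f (w t) = a t).card := by
  obtain ⟨σ, hσ⟩ := exists_perm_tuple hw hv
  have hσ' : ∀ t, σ.symm (v t) = w t := fun t => by
    rw [← hσ t, Equiv.symm_apply_apply]
  apply Finset.card_bij' (fun f _ => f ∘ σ) (fun g _ => g ∘ σ.symm)
  · intro f hf
    simp only [mem_filter] at hf ⊢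
    exact ⟨comp_perm_mem σ hf.1, fun t => by
      simp only [Function.comp_apply, hσ t]; exact hf.2 t⟩
  · intro g hg
    simp only [mem_filter] at hg ⊢
    exact ⟨comp_perm_mem σ.symm hg.1, fun t => by
      simp only [Function.comp_apply, hσ' t]; exact hg.2 t⟩
  · intro f _; funext x; simp
  · intro g _; funext x; simp

lemma count_master {k : ℕ} {v : Fin k → V} (hv : Function.Injective v)
    (a : Fin k → Fin s) (P : ℕ)
    (hP : ∀ f ∈ colorings V s c,
      ((univ.filter fun w : Fin k → V => Function.Injective w).filter
        fun w => ∀ t, f (w t) = a t).card = P) :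
    ((colorings V s c).filter fun f => ∀ t, f (v t) = a t).card
      * (Fintype.card V).descFactorial k = (colorings V s c).card * P := by
  classical
  set T := univ.filter fun w : Fin k → V => Function.Injective w with hT
  have hTcard : T.card = (Fintype.card V).descFactorial k := by
    have h1 : T.card = Fintype.card {w : Fin k → V // Function.Injective w} :=
      (Fintype.card_subtype _).symm
    rw [h1, Fintype.card_congr (Equiv.subtypeInjectiveEquivEmbedding (Fin k) V),
      Fintype.card_embedding_eq, Fintype.card_fin]
  have key : ∑ w ∈ T, ((colorings V s c).filter fun f => ∀ t, f (w t) = a t).card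
      = (colorings V s c).card * P := by
    have : ∀ w ∈ T, ((colorings V s c).filter fun f => ∀ t, f (w t) = a t).card
        = ∑ f ∈ colorings V s c, if (∀ t, f (w t) = a t) then 1 else 0 := fun w _ =>
      Finset.card_filter _ _
    rw [Finset.sum_congr rfl this, Finset.sum_comm]
    have : ∀ f ∈ colorings V s c,
        (∑ w ∈ T, if (∀ t, f (w t) = a t) then 1 else 0) = P := fun f hf => by
      rw [← Finset.card_filter]; exact hP f hf
    rw [Finset.sum_congr rfl this, Finset.sum_const, smul_eq_mul]
  have key2 : ∑ w ∈ T, ((colorings V s c).filter fun f => ∀ t, f (w t) = a t).card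
      = T.card * ((colorings V s c).filter fun f => ∀ t, f (v t) = a t).card := by
    rw [Finset.sum_congr rfl fun w hw => count_tuple_eq
      (by simpa [hT] using (mem_filter.1 hw).2) hv a, Finset.sum_const, smul_eq_mul]
  rw [mul_comm, ← hTcard, ← key2, key]

end VarBi

set_option linter.unusedSectionVars false

section helpers
variable {V : Type} [DecidableEq V]

lemma inj2 {x y : V} (h : x ≠ y) : Function.Injective ![x, y] := by
  intro a b hab
  fin_cases a <;> fin_cases b <;> simp_all

lemma inj3 {x y z : V} (hxy : x ≠ y) (hxz : x ≠ z) (hyz : y ≠ z) :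
    Function.Injective ![x, y, z] := by
  intro a b hab
  fin_cases a <;> fin_cases b <;> simp_all

lemma inj4 {x y z w : V} (hxy : x ≠ y) (hxz : x ≠ z) (hxw : x ≠ w)
    (hyz : y ≠ z) (hyw : y ≠ w) (hzw : z ≠ w) :
    Function.Injective ![x, y, z, w] := by
  intro a b hab
  fin_cases a <;> fin_cases b <;> simp_all

end helpers

namespace VarBi
variable {V : Type} [Fintype V] [DecidableEq V] {s : ℕ}

lemma pattern2 {f : V → Fin s} {i j : Fin s} (hij : i ≠ j) :
    ((univ.filter fun w : Fin 2 → V => Function.Injective w).filter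
      fun w => ∀ t, f (w t) = ![i, j] t).card
    = (univ.filter fun x => f x = i).card * (univ.filter fun x => f x = j).card := by
  rw [← Finset.card_product]
  apply Finset.card_bij' (fun w _ => (w 0, w 1)) (fun p _ => ![p.1, p.2])
  · intro w hw
    simp only [mem_filter, mem_univ, true_and, mem_product] at hw ⊢
    exact ⟨by simpa using hw.2 0, by simpa using hw.2 1⟩
  · intro p hp
    simp only [mem_product, mem_filter, mem_univ, true_and] at hp ⊢
    refine ⟨inj2 (fun h => hij ?_), fun t => ?_⟩
    · rw [← hp.1, h, hp.2]
    · fin_cases t <;> simp [hp.1, hp.2]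
  · intro w _; funext t; fin_cases t <;> simp
  · intro p _; simp

lemma pattern3 {f : V → Fin s} {i j : Fin s} (hij : i ≠ j) :
    ((univ.filter fun w : Fin 3 → V => Function.Injective w).filter
      fun w => ∀ t, f (w t) = ![i, j, j] t).card
    = (univ.filter fun x => f x = i).card *
        ((univ.filter fun x => f x = j).card *
          (univ.filter fun x => f x = j).card - (univ.filter fun x => f x = j).card) := by
  rw [← Finset.offDiag_card, ← Finset.card_product]
  apply Finset.card_bij' (fun w _ => (w 0, (w 1, w 2))) (fun p _ => ![p.1, p.2.1, p.2.2])
  · intro w hw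
    simp only [mem_filter, mem_univ, true_and, mem_product, mem_offDiag] at hw ⊢
    exact ⟨by simpa using hw.2 0, ⟨by simpa using hw.2 1, by simpa using hw.2 2,
      hw.1.ne (by decide)⟩⟩
  · intro p hp
    simp only [mem_product, mem_offDiag, mem_filter, mem_univ, true_and] at hp ⊢
    obtain ⟨h1, h2, h3, h4⟩ := hp
    have hx : p.1 ≠ p.2.1 := fun h => hij (by rw [← h1, h, h2])
    have hy : p.1 ≠ p.2.2 := fun h => hij (by rw [← h1, h, h3])
    refine ⟨inj3 hx hy h4, fun t => ?_⟩
    fin_cases t <;> simp [h1, h2, h3]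
  · intro w _; funext t; fin_cases t <;> simp
  · intro p _; simp

lemma pattern3' {f : V → Fin s} {i j : Fin s} (hij : i ≠ j) :
    ((univ.filter fun w : Fin 3 → V => Function.Injective w).filter
      fun w => ∀ t, f (w t) = ![i, i, j] t).card
    = ((univ.filter fun x => f x = i).card *
          (univ.filter fun x => f x = i).card - (univ.filter fun x => f x = i).card) *
        (univ.filter fun x => f x = j).card := by
  rw [← Finset.offDiag_card, ← Finset.card_product]
  apply Finset.card_bij' (fun w _ => ((w 0, w 1), w 2)) (fun p _ => ![p.1.1, p.1.2, p.2])
  · intro w hw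
    simp only [mem_filter, mem_univ, true_and, mem_product, mem_offDiag] at hw ⊢
    exact ⟨⟨by simpa using hw.2 0, by simpa using hw.2 1, hw.1.ne (by decide)⟩,
      by simpa using hw.2 2⟩
  · intro p hp
    simp only [mem_product, mem_offDiag, mem_filter, mem_univ, true_and] at hp ⊢
    obtain ⟨⟨h1, h2, h3⟩, h4⟩ := hp
    have hx : p.1.1 ≠ p.2 := fun h => hij (by rw [← h1, h, h4])
    have hy : p.1.2 ≠ p.2 := fun h => hij (by rw [← h2, h, h4])
    refine ⟨inj3 h3 hx hy, fun t => ?_⟩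
    fin_cases t <;> simp [h1, h2, h4]
  · intro w _; funext t; fin_cases t <;> simp
  · intro p _; simp

lemma pattern4 {f : V → Fin s} {i j : Fin s} (hij : i ≠ j) :
    ((univ.filter fun w : Fin 4 → V => Function.Injective w).filter
      fun w => ∀ t, f (w t) = ![i, j, i, j] t).card
    = ((univ.filter fun x => f x = i).card *
          (univ.filter fun x => f x = i).card - (univ.filter fun x => f x = i).card) *
        ((univ.filter fun x => f x = j).card *
          (univ.filter fun x => f x = j).card - (univ.filter fun x => f x = j).card) := by
  rw [← Finset.offDiag_card, ← Finset.offDiag_card, ← Finset.card_product]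
  apply Finset.card_bij' (fun w _ => ((w 0, w 2), (w 1, w 3)))
    (fun p _ => ![p.1.1, p.2.1, p.1.2, p.2.2])
  · intro w hw
    simp only [mem_filter, mem_univ, true_and, mem_product, mem_offDiag] at hw ⊢
    exact ⟨⟨by simpa using hw.2 0, by simpa using hw.2 2, hw.1.ne (by decide)⟩,
      ⟨by simpa using hw.2 1, by simpa using hw.2 3, hw.1.ne (by decide)⟩⟩
  · intro p hp
    simp only [mem_product, mem_offDiag, mem_filter, mem_univ, true_and] at hp ⊢
    obtain ⟨⟨h1, h2, h3⟩, ⟨h4, h5, h6⟩⟩ := hp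
    have e14 : p.1.1 ≠ p.2.1 := fun h => hij (by rw [← h1, h, h4])
    have e15 : p.1.1 ≠ p.2.2 := fun h => hij (by rw [← h1, h, h5])
    have e24 : p.1.2 ≠ p.2.1 := fun h => hij (by rw [← h2, h, h4])
    have e25 : p.1.2 ≠ p.2.2 := fun h => hij (by rw [← h2, h, h5])
    refine ⟨inj4 e14 h3 e15 e24.symm h6 e25, fun t => ?_⟩
    fin_cases t <;> simp [h1, h2, h4, h5]
  · intro w _; funext t; fin_cases t <;> simp
  · intro p _; simp

end VarBi

namespace VarBi
variable {V : Type} [Fintype V] [DecidableEq V] {s : ℕ} {c : Fin s → ℕ}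

lemma colorings_nonempty (hc : ∑ i, c i = Fintype.card V) :
    ∃ f : V → Fin s, f ∈ colorings V s c := by
  have hcard : Fintype.card ((i : Fin s) × Fin (c i)) = Fintype.card V := by
    simp [Fintype.card_sigma, hc]
  obtain ⟨e⟩ : Nonempty (V ≃ (i : Fin s) × Fin (c i)) := ⟨Fintype.equivOfCardEq hcard.symm⟩
  refine ⟨fun v => (e v).1, mem_colorings.2 fun i => ?_⟩
  have h1 : (univ.filter fun v : V => (e v).1 = i).card
      = (univ.filter fun x : (i : Fin s) × Fin (c i) => x.1 = i).card := by
    apply Finset.card_bij (fun v _ => e v)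
    · intro a ha; simp only [mem_filter, mem_univ, true_and] at ha ⊢; exact ha
    · intro a _ b _ h; exact e.injective h
    · intro b hb
      simp only [mem_filter, mem_univ, true_and] at hb ⊢
      exact ⟨e.symm b, by simpa using hb, by simp⟩
  rw [h1, Finset.card_filter, ← Finset.univ_sigma_univ, Finset.sum_sigma]
  simp [apply_ite Finset.card, Finset.sum_ite_eq, Finset.card_univ]

variable {i j : Fin s}

lemma cnt2_key (hij : i ≠ j) {u v : V} (huv : u ≠ v) :
    ((colorings V s c).filter fun f => f u = i ∧ f v = j).card
        * (Fintype.card V).descFactorial 2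
      = (colorings V s c).card * (c i * c j) := by
  have hfc : ((colorings V s c).filter fun f => f u = i ∧ f v = j)
      = ((colorings V s c).filter fun f => ∀ t, f (![u, v] t) = ![i, j] t) := by
    apply Finset.filter_congr
    intro f _
    constructor
    · rintro ⟨h0, h1⟩ t; fin_cases t <;> simpa
    · intro h; exact ⟨by simpa using h 0, by simpa using h 1⟩
  rw [hfc]
  exact count_master (inj2 huv) ![i, j] _ (fun f hf => by
    rw [pattern2 hij]
    rw [mem_colorings.1 hf i, mem_colorings.1 hf j])

lemma cnt3_key (hij : i ≠ j) {u v w : V} (huv : u ≠ v) (huw : u ≠ w) (hvw : v ≠ w) :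
    ((colorings V s c).filter fun f => f u = i ∧ f v = j ∧ f w = j).card
        * (Fintype.card V).descFactorial 3
      = (colorings V s c).card * (c i * (c j * c j - c j)) := by
  have hfc : ((colorings V s c).filter fun f => f u = i ∧ f v = j ∧ f w = j)
      = ((colorings V s c).filter fun f => ∀ t, f (![u, v, w] t) = ![i, j, j] t) := by
    apply Finset.filter_congr
    intro f _
    constructor
    · rintro ⟨h0, h1, h2⟩ t; fin_cases t <;> simpa
    · intro h; exact ⟨by simpa using h 0, by simpa using h 1, by simpa using h 2⟩
  rw [hfc]
  exact count_master (inj3 huv huw hvw) ![i, j, j] _ (fun f hf => by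
    rw [pattern3 hij]
    rw [mem_colorings.1 hf i, mem_colorings.1 hf j])

lemma cnt3'_key (hij : i ≠ j) {u v w : V} (huv : u ≠ v) (huw : u ≠ w) (hvw : v ≠ w) :
    ((colorings V s c).filter fun f => f u = i ∧ f v = i ∧ f w = j).card
        * (Fintype.card V).descFactorial 3
      = (colorings V s c).card * ((c i * c i - c i) * c j) := by
  have hfc : ((colorings V s c).filter fun f => f u = i ∧ f v = i ∧ f w = j)
      = ((colorings V s c).filter fun f => ∀ t, f (![u, v, w] t) = ![i, i, j] t) := by
    apply Finset.filter_congr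
    intro f _
    constructor
    · rintro ⟨h0, h1, h2⟩ t; fin_cases t <;> simpa
    · intro h; exact ⟨by simpa using h 0, by simpa using h 1, by simpa using h 2⟩
  rw [hfc]
  exact count_master (inj3 huv huw hvw) ![i, i, j] _ (fun f hf => by
    rw [pattern3' hij]
    rw [mem_colorings.1 hf i, mem_colorings.1 hf j])

lemma cnt4_key (hij : i ≠ j) {u v u' v' : V} (h1 : u ≠ v) (h2 : u ≠ u') (h3 : u ≠ v')
    (h4 : v ≠ u') (h5 : v ≠ v') (h6 : u' ≠ v') :
    ((colorings V s c).filter fun f => f u = i ∧ f v = j ∧ f u' = i ∧ f v' = j).card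
        * (Fintype.card V).descFactorial 4
      = (colorings V s c).card * ((c i * c i - c i) * (c j * c j - c j)) := by
  have hfc : ((colorings V s c).filter fun f => f u = i ∧ f v = j ∧ f u' = i ∧ f v' = j)
      = ((colorings V s c).filter fun f => ∀ t, f (![u, v, u', v'] t) = ![i, j, i, j] t) := by
    apply Finset.filter_congr
    intro f _
    constructor
    · rintro ⟨h0, hh1, hh2, hh3⟩ t; fin_cases t <;> simpa
    · intro h; exact ⟨by simpa using h 0, by simpa using h 1, by simpa using h 2,
        by simpa using h 3⟩
  rw [hfc]
  exact count_master (inj4 h1 h2 h3 h4 h5 h6) ![i, j, i, j] _ (fun f hf => by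
    rw [pattern4 hij]
    rw [mem_colorings.1 hf i, mem_colorings.1 hf j])

end VarBi

/-- `M^{i,j} f` : the number of edges of `G` with one endpoint colored `i` and
the other colored `j`. -/
def biEdges (V : Type) [Fintype V] [DecidableEq V] (G : SimpleGraph V)
    [DecidableRel G.Adj] (s : ℕ) (i j : Fin s) (f : V → Fin s) : ℕ :=
  (G.edgeFinset.filter fun e => Sym2.map f e = s(i, j)).card

namespace VarBi

lemma nat_sq_aux (d : ℕ) : d * d - d = 2 * d.choose 2 ∧ d * d = 2 * d.choose 2 + d := by
  have h2 : 2 * d.choose 2 = d * (d - 1) := by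
    rw [Nat.choose_two_right]
    exact Nat.mul_div_cancel' (Nat.even_mul_pred_self d).two_dvd
  rw [h2]
  cases d with
  | zero => simp
  | succ k =>
      constructor
      · rw [Nat.succ_sub_one, show (k+1)*(k+1) = (k+1)*k + (k+1) from by ring]
        simp
      · rw [Nat.succ_sub_one]; ring

lemma df2_aux (d : ℕ) : d.descFactorial 2 = d * d - d := by
  rw [Nat.descFactorial_succ, Nat.descFactorial_one]
  cases d with
  | zero => simp
  | succ k =>
      rw [Nat.succ_sub_one, show (k+1)*(k+1) = (k+1)*k + (k+1) from by ring]
      simp [Nat.mul_comm]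

variable {V : Type} [Fintype V] [DecidableEq V] (G : SimpleGraph V) [DecidableRel G.Adj]

lemma adjP_card :
    ((univ ×ˢ univ : Finset (V × V)).filter fun p => G.Adj p.1 p.2).card
      = ∑ u, G.degree u := by
  rw [Finset.card_filter, Finset.sum_product]
  refine Finset.sum_congr rfl fun u _ => ?_
  rw [← Finset.card_filter]
  show (univ.filter fun v => G.Adj u v).card = G.degree u
  rw [← SimpleGraph.neighborFinset_eq_filter, SimpleGraph.card_neighborFinset_eq_degree]

variable {s : ℕ} {i j : Fin s}

lemma biEdges_eq_card (hij : i ≠ j) (f : V → Fin s) :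
    biEdges V G s i j f
      = (((univ ×ˢ univ : Finset (V × V)).filter fun p => G.Adj p.1 p.2).filter
          fun p => f p.1 = i ∧ f p.2 = j).card := by
  rw [biEdges]
  symm
  apply Finset.card_bij (fun p _ => Sym2.mk p.1 p.2)
  · rintro ⟨a, b⟩ hp
    simp only [Finset.mem_filter, Finset.mem_product, Finset.mem_univ, true_and,
      SimpleGraph.mem_edgeFinset, SimpleGraph.mem_edgeSet] at hp ⊢
    exact ⟨hp.1, by simp [Sym2.map_pair_eq, hp.2.1, hp.2.2]⟩
  · rintro ⟨a, b⟩ ha ⟨a', b'⟩ hb h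
    simp only [Finset.mem_filter, Finset.mem_product, Finset.mem_univ, true_and] at ha hb
    rw [Sym2.mk_eq_mk_iff] at h
    rcases h with h | h
    · exact h
    · exfalso
      simp only [Prod.swap_prod_mk, Prod.mk.injEq] at h
      exact hij (by rw [← ha.2.1, h.1, hb.2.2])
  · intro e he
    simp only [Finset.mem_filter, SimpleGraph.mem_edgeFinset] at he
    induction e with
    | _ a b =>
        have hadj : G.Adj a b := (SimpleGraph.mem_edgeSet G).1 he.1
        rw [Sym2.map_pair_eq, Sym2.eq_iff] at he
        rcases he.2 with ⟨h1, h2⟩ | ⟨h1, h2⟩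
        · exact ⟨(a, b), by simp only [Finset.mem_filter, Finset.mem_product,
            Finset.mem_univ, true_and]; exact ⟨hadj, h1, h2⟩, rfl⟩
        · refine ⟨(b, a), by simp only [Finset.mem_filter, Finset.mem_product,
            Finset.mem_univ, true_and]; exact ⟨hadj.symm, h2, h1⟩, Sym2.eq_swap⟩

lemma cardE1 :
    ((univ : Finset ((V × V) × (V × V))).filter fun pq =>
      G.Adj pq.1.1 pq.1.2 ∧ pq.1 = pq.2).card = ∑ u, G.degree u := by
  rw [← adjP_card G]
  apply Finset.card_bij (fun pq _ => pq.1)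
  · rintro ⟨p, q⟩ h
    simp only [Finset.mem_filter, Finset.mem_univ, true_and, Finset.mem_product] at h ⊢
    exact h.1
  · rintro ⟨p, q⟩ ha ⟨p', q'⟩ hb h
    simp only [Finset.mem_filter, Finset.mem_univ, true_and] at ha hb
    dsimp at h ha hb
    rw [Prod.mk.injEq]
    exact ⟨h, by rw [← ha.2, ← hb.2, h]⟩
  · intro p hp
    simp only [Finset.mem_filter, Finset.mem_product, Finset.mem_univ, true_and] at hp
    refine ⟨(p, p), ?_, rfl⟩
    simp only [Finset.mem_filter, Finset.mem_univ, true_and, and_true]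
    tauto

lemma cardE2 :
    ((univ : Finset ((V × V) × (V × V))).filter fun pq =>
      (G.Adj pq.1.1 pq.1.2 ∧ G.Adj pq.2.1 pq.2.2) ∧ pq.1.1 = pq.2.1 ∧ pq.1.2 ≠ pq.2.2).card
      = ∑ u, (G.degree u * G.degree u - G.degree u) := by
  have h0 : ∀ u : V, G.degree u * G.degree u - G.degree u = (G.neighborFinset u).offDiag.card :=
    fun u => by rw [Finset.offDiag_card, SimpleGraph.card_neighborFinset_eq_degree]
  rw [Finset.sum_congr rfl fun u _ => h0 u, ← Finset.card_sigma]
  refine Finset.card_bij' (fun pq _ => ⟨pq.1.1, (pq.1.2, pq.2.2)⟩)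
    (fun x _ => ((x.1, x.2.1), (x.1, x.2.2))) ?_ ?_ ?_ ?_
  · rintro ⟨⟨a, b⟩, ⟨a', b'⟩⟩ h
    simp only [Finset.mem_filter, Finset.mem_univ, true_and] at h
    obtain ⟨⟨h1, h2⟩, h3, h4⟩ := h
    dsimp at *
    subst h3
    simp only [Finset.mem_sigma, Finset.mem_univ, Finset.mem_offDiag,
      SimpleGraph.mem_neighborFinset, true_and, ne_eq, eq_self_iff_true, and_true]
    tauto
  · rintro ⟨u, v, w⟩ hx
    simp only [Finset.mem_sigma, Finset.mem_univ, Finset.mem_offDiag,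
      SimpleGraph.mem_neighborFinset, true_and] at hx
    simp only [Finset.mem_filter, Finset.mem_univ, true_and, ne_eq,
      eq_self_iff_true, and_true]
    tauto
  · rintro ⟨⟨a, b⟩, ⟨a', b'⟩⟩ h
    simp only [Finset.mem_filter, Finset.mem_univ, true_and] at h
    obtain ⟨⟨h1, h2⟩, h3, h4⟩ := h
    dsimp at *
    subst h3
    rfl
  · rintro ⟨u, v, w⟩ hx
    rfl

lemma cardE3 :
    ((univ : Finset ((V × V) × (V × V))).filter fun pq =>
      (G.Adj pq.1.1 pq.1.2 ∧ G.Adj pq.2.1 pq.2.2) ∧ pq.1.1 ≠ pq.2.1 ∧ pq.1.2 = pq.2.2).card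
      = ∑ u, (G.degree u * G.degree u - G.degree u) := by
  have h0 : ∀ u : V, G.degree u * G.degree u - G.degree u = (G.neighborFinset u).offDiag.card :=
    fun u => by rw [Finset.offDiag_card, SimpleGraph.card_neighborFinset_eq_degree]
  rw [Finset.sum_congr rfl fun u _ => h0 u, ← Finset.card_sigma]
  refine Finset.card_bij' (fun pq _ => ⟨pq.1.2, (pq.1.1, pq.2.1)⟩)
    (fun x _ => ((x.2.1, x.1), (x.2.2, x.1))) ?_ ?_ ?_ ?_
  · rintro ⟨⟨a, b⟩, ⟨a', b'⟩⟩ h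
    simp only [Finset.mem_filter, Finset.mem_univ, true_and] at h
    obtain ⟨⟨h1, h2⟩, h3, h4⟩ := h
    dsimp at *
    subst h4
    have h1' := h1.symm
    have h2' := h2.symm
    simp only [Finset.mem_sigma, Finset.mem_univ, Finset.mem_offDiag,
      SimpleGraph.mem_neighborFinset, true_and, ne_eq, eq_self_iff_true, and_true]
    tauto
  · rintro ⟨u, v, w⟩ hx
    simp only [Finset.mem_sigma, Finset.mem_univ, Finset.mem_offDiag,
      SimpleGraph.mem_neighborFinset, true_and] at hx
    have h1' := hx.1.symm
    have h2' := hx.2.1.symm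
    simp only [Finset.mem_filter, Finset.mem_univ, true_and, ne_eq,
      eq_self_iff_true, and_true]
    tauto
  · rintro ⟨⟨a, b⟩, ⟨a', b'⟩⟩ h
    simp only [Finset.mem_filter, Finset.mem_univ, true_and] at h
    obtain ⟨⟨h1, h2⟩, h3, h4⟩ := h
    dsimp at *
    subst h4
    rfl
  · rintro ⟨u, v, w⟩ hx
    rfl

lemma cardE4 :
    ((univ : Finset ((V × V) × (V × V))).filter fun pq =>
      (G.Adj pq.1.1 pq.1.2 ∧ G.Adj pq.2.1 pq.2.2) ∧ pq.1.1 = pq.2.2).card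
      = ∑ u, G.degree u * G.degree u := by
  have h0 : ∀ u : V, G.degree u * G.degree u
      = ((G.neighborFinset u) ×ˢ (G.neighborFinset u)).card :=
    fun u => by rw [Finset.card_product, SimpleGraph.card_neighborFinset_eq_degree]
  rw [Finset.sum_congr rfl fun u _ => h0 u, ← Finset.card_sigma]
  refine Finset.card_bij' (fun pq _ => ⟨pq.1.1, (pq.1.2, pq.2.1)⟩)
    (fun x _ => ((x.1, x.2.1), (x.2.2, x.1))) ?_ ?_ ?_ ?_
  · rintro ⟨⟨a, b⟩, ⟨a', b'⟩⟩ h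
    simp only [Finset.mem_filter, Finset.mem_univ, true_and] at h
    obtain ⟨⟨h1, h2⟩, h3⟩ := h
    dsimp at *
    subst h3
    have h2' := h2.symm
    simp only [Finset.mem_sigma, Finset.mem_univ, Finset.mem_product,
      SimpleGraph.mem_neighborFinset, true_and, ne_eq, eq_self_iff_true, and_true]
    tauto
  · rintro ⟨u, v, w⟩ hx
    simp only [Finset.mem_sigma, Finset.mem_univ, Finset.mem_product,
      SimpleGraph.mem_neighborFinset, true_and] at hx
    have h2' := hx.2.symm
    simp only [Finset.mem_filter, Finset.mem_univ, true_and, ne_eq,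
      eq_self_iff_true, and_true]
    tauto
  · rintro ⟨⟨a, b⟩, ⟨a', b'⟩⟩ h
    simp only [Finset.mem_filter, Finset.mem_univ, true_and] at h
    obtain ⟨⟨h1, h2⟩, h3⟩ := h
    dsimp at *
    subst h3
    rfl
  · rintro ⟨u, v, w⟩ hx
    rfl

lemma cardE5 :
    ((univ : Finset ((V × V) × (V × V))).filter fun pq =>
      (G.Adj pq.1.1 pq.1.2 ∧ G.Adj pq.2.1 pq.2.2) ∧ pq.1.2 = pq.2.1 ∧ pq.1.1 ≠ pq.2.2).card
      = ∑ u, (G.degree u * G.degree u - G.degree u) := by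
  have h0 : ∀ u : V, G.degree u * G.degree u - G.degree u = (G.neighborFinset u).offDiag.card :=
    fun u => by rw [Finset.offDiag_card, SimpleGraph.card_neighborFinset_eq_degree]
  rw [Finset.sum_congr rfl fun u _ => h0 u, ← Finset.card_sigma]
  refine Finset.card_bij' (fun pq _ => ⟨pq.1.2, (pq.1.1, pq.2.2)⟩)
    (fun x _ => ((x.2.1, x.1), (x.1, x.2.2))) ?_ ?_ ?_ ?_
  · rintro ⟨⟨a, b⟩, ⟨a', b'⟩⟩ h
    simp only [Finset.mem_filter, Finset.mem_univ, true_and] at h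
    obtain ⟨⟨h1, h2⟩, h3, h4⟩ := h
    dsimp at *
    subst h3
    have h1' := h1.symm
    simp only [Finset.mem_sigma, Finset.mem_univ, Finset.mem_offDiag,
      SimpleGraph.mem_neighborFinset, true_and, ne_eq, eq_self_iff_true, and_true]
    tauto
  · rintro ⟨u, v, w⟩ hx
    simp only [Finset.mem_sigma, Finset.mem_univ, Finset.mem_offDiag,
      SimpleGraph.mem_neighborFinset, true_and] at hx
    have h1' := hx.1.symm
    simp only [Finset.mem_filter, Finset.mem_univ, true_and, ne_eq,
      eq_self_iff_true, and_true]
    tauto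
  · rintro ⟨⟨a, b⟩, ⟨a', b'⟩⟩ h
    simp only [Finset.mem_filter, Finset.mem_univ, true_and] at h
    obtain ⟨⟨h1, h2⟩, h3, h4⟩ := h
    dsimp at *
    subst h3
    rfl
  · rintro ⟨u, v, w⟩ hx
    rfl

end VarBi

open Finset in
/-- Theorem 1.2: under a uniform random `c`-coloring, for distinct colors
`i ≠ j`, the variance of the number `M^{i,j}` of `(i,j)`-edges equals
`2m (cᵢc_j/n^(2))(1 - 2m cᵢc_j/n^(2)) +
 2[((cᵢ c_j^(2) + cᵢ^(2) c_j)/n^(3) - 4 cᵢ^(2) c_j^(2)/n^(4)) π₃(G)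
   + 4 (cᵢ^(2) c_j^(2)/n^(4)) (m choose 2)]`. -/
theorem variance_bi_edges (V : Type) [Fintype V] [DecidableEq V]
    (G : SimpleGraph V) [DecidableRel G.Adj] (n m p3 s : ℕ)
    (hn : Fintype.card V = n) (hm : G.edgeFinset.card = m)
    (hp3 : p3 = ∑ v : V, (G.degree v).choose 2)
    (c : Fin s → ℕ) (hpos : ∀ i, 0 < c i) (hsum : ∑ i, c i = n)
    (i j : Fin s) (hij : i ≠ j) :
    (∑ f ∈ colorings V s c, (biEdges V G s i j f : ℚ) ^ 2) /
          ((colorings V s c).card : ℚ) -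
        ((∑ f ∈ colorings V s c, (biEdges V G s i j f : ℚ)) /
          ((colorings V s c).card : ℚ)) ^ 2
      = 2 * (m : ℚ) * (((c i : ℚ) * (c j : ℚ)) / (n.descFactorial 2 : ℚ)) *
          (1 - 2 * (m : ℚ) * (((c i : ℚ) * (c j : ℚ)) / (n.descFactorial 2 : ℚ)))
        + 2 * ((((c i : ℚ) * ((c j).descFactorial 2 : ℚ)
                  + ((c i).descFactorial 2 : ℚ) * (c j : ℚ)) / (n.descFactorial 3 : ℚ)
                - 4 * ((c i).descFactorial 2 : ℚ) * ((c j).descFactorial 2 : ℚ) /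
                    (n.descFactorial 4 : ℚ)) * (p3 : ℚ)
              + 4 * (((c i).descFactorial 2 : ℚ) * ((c j).descFactorial 2 : ℚ) /
                    (n.descFactorial 4 : ℚ)) * (m.choose 2 : ℚ)) := by
  classical
  obtain ⟨f0, hf0⟩ := VarBi.colorings_nonempty (V := V) (c := c) (hsum.trans hn.symm)
  set K := colorings V s c with hK
  have hNQ : (K.card : ℚ) ≠ 0 := by
    have : 0 < K.card := Finset.card_pos.2 ⟨f0, hf0⟩
    exact_mod_cast this.ne'
  have h2n : 2 ≤ n := by
    have hle : c i + c j ≤ ∑ k, c k := by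
      rw [← Finset.sum_pair hij]
      exact Finset.sum_le_sum_of_subset (Finset.subset_univ _)
    have h1 := hpos i; have h2 := hpos j
    omega
  have hnn2 : ((n.descFactorial 2 : ℕ) : ℚ) ≠ 0 := by
    rw [Nat.cast_ne_zero, Ne, Nat.descFactorial_eq_zero_iff_lt]; omega
  set AdjP := ((univ ×ˢ univ : Finset (V × V)).filter fun p => G.Adj p.1 p.2) with hAdjP
  have hAdjcard : AdjP.card = 2 * m := by
    rw [hAdjP, VarBi.adjP_card, SimpleGraph.sum_degrees_eq_twice_card_edges, hm]
  have hadj : ∀ p : V × V, p ∈ AdjP → G.Adj p.1 p.2 := fun p hp => by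
    rw [hAdjP] at hp; exact (Finset.mem_filter.1 hp).2
  have hXrep : ∀ f : V → Fin s, biEdges V G s i j f
      = (AdjP.filter fun p => f p.1 = i ∧ f p.2 = j).card := fun f => by
    rw [hAdjP]; exact VarBi.biEdges_eq_card G hij f
  -- ====== first moment ======
  have hS1swap : ∑ f ∈ K, biEdges V G s i j f
      = ∑ p ∈ AdjP, (K.filter fun f => f p.1 = i ∧ f p.2 = j).card := by
    calc ∑ f ∈ K, biEdges V G s i j f
        = ∑ f ∈ K, ∑ p ∈ AdjP, if f p.1 = i ∧ f p.2 = j then 1 else 0 :=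
          Finset.sum_congr rfl fun f _ => by rw [hXrep f, Finset.card_filter]
      _ = ∑ p ∈ AdjP, ∑ f ∈ K, if f p.1 = i ∧ f p.2 = j then 1 else 0 := Finset.sum_comm
      _ = ∑ p ∈ AdjP, (K.filter fun f => f p.1 = i ∧ f p.2 = j).card :=
          Finset.sum_congr rfl fun p _ => (Finset.card_filter _ _).symm
  have hS1nat : (∑ f ∈ K, biEdges V G s i j f) * n.descFactorial 2
      = 2 * m * (K.card * (c i * c j)) := by
    rw [hS1swap, Finset.sum_mul]
    calc ∑ p ∈ AdjP, (K.filter fun f => f p.1 = i ∧ f p.2 = j).card * n.descFactorial 2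
        = ∑ _p ∈ AdjP, K.card * (c i * c j) := by
          refine Finset.sum_congr rfl fun p hp => ?_
          rw [← hn]
          exact VarBi.cnt2_key hij (G.ne_of_adj (hadj p hp))
      _ = AdjP.card * (K.card * (c i * c j)) := by rw [Finset.sum_const, smul_eq_mul]
      _ = _ := by rw [hAdjcard]
  have hS1Q : (∑ f ∈ K, (biEdges V G s i j f : ℚ))
      = K.card * (2 * m * (((c i : ℚ) * (c j : ℚ)) / (n.descFactorial 2 : ℚ))) := by
    have h := congrArg (fun x : ℕ => (x : ℚ)) hS1nat
    push_cast at h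
    rw [show (K.card : ℚ) * (2 * m * (((c i : ℚ) * (c j : ℚ)) / (n.descFactorial 2 : ℚ)))
        = 2 * m * ((K.card : ℚ) * ((c i : ℚ) * (c j : ℚ))) / (n.descFactorial 2 : ℚ)
      from by ring, eq_div_iff hnn2]
    linear_combination h
  -- ====== second moment ======
  have hS2swap : ∑ f ∈ K, (biEdges V G s i j f) ^ 2
      = ∑ pq ∈ AdjP ×ˢ AdjP, (K.filter fun f =>
          (f pq.1.1 = i ∧ f pq.1.2 = j) ∧ (f pq.2.1 = i ∧ f pq.2.2 = j)).card := by
    calc ∑ f ∈ K, (biEdges V G s i j f) ^ 2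
        = ∑ f ∈ K, ∑ pq ∈ AdjP ×ˢ AdjP,
            (if (f pq.1.1 = i ∧ f pq.1.2 = j) ∧ (f pq.2.1 = i ∧ f pq.2.2 = j)
              then 1 else 0) := by
          refine Finset.sum_congr rfl fun f _ => ?_
          rw [hXrep f, sq, Finset.card_filter, Finset.sum_mul_sum, Finset.sum_product]
          refine Finset.sum_congr rfl fun p _ => Finset.sum_congr rfl fun q _ => ?_
          by_cases h1 : (f p.1 = i ∧ f p.2 = j) <;>
            by_cases h2 : (f q.1 = i ∧ f q.2 = j) <;> simp [h1, h2]
      _ = ∑ pq ∈ AdjP ×ˢ AdjP, ∑ f ∈ K,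
            (if (f pq.1.1 = i ∧ f pq.1.2 = j) ∧ (f pq.2.1 = i ∧ f pq.2.2 = j)
              then 1 else 0) := Finset.sum_comm
      _ = _ := Finset.sum_congr rfl fun pq _ => (Finset.card_filter _ _).symm
  set g : (V × V) × (V × V) → ℕ := fun pq => (K.filter fun f =>
      (f pq.1.1 = i ∧ f pq.1.2 = j) ∧ (f pq.2.1 = i ∧ f pq.2.2 = j)).card with hg
  set D := AdjP ×ˢ AdjP with hD
  have hmemD : ∀ pq : (V × V) × (V × V), pq ∈ D →
      G.Adj pq.1.1 pq.1.2 ∧ G.Adj pq.2.1 pq.2.2 := fun pq hpq => by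
    rw [hD, Finset.mem_product] at hpq
    exact ⟨hadj _ hpq.1, hadj _ hpq.2⟩
  set C1 := D.filter (fun pq => pq.1 = pq.2) with hC1
  set R1 := D.filter (fun pq => ¬pq.1 = pq.2) with hR1
  set C2 := R1.filter (fun pq => pq.1.1 = pq.2.1) with hC2
  set R2 := R1.filter (fun pq => ¬pq.1.1 = pq.2.1) with hR2
  set C3 := R2.filter (fun pq => pq.1.2 = pq.2.2) with hC3
  set R3 := R2.filter (fun pq => ¬pq.1.2 = pq.2.2) with hR3
  set C4 := R3.filter (fun pq => pq.1.1 = pq.2.2) with hC4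
  set R4 := R3.filter (fun pq => ¬pq.1.1 = pq.2.2) with hR4
  set C5 := R4.filter (fun pq => pq.1.2 = pq.2.1) with hC5
  set C6 := R4.filter (fun pq => ¬pq.1.2 = pq.2.1) with hC6
  -- sum splitting over ℚ
  have t0 : ∑ pq ∈ D, (g pq : ℚ) = ∑ pq ∈ C1, (g pq : ℚ) + ∑ pq ∈ R1, (g pq : ℚ) :=
    (Finset.sum_filter_add_sum_filter_not D _ _).symm
  have t1 : ∑ pq ∈ R1, (g pq : ℚ) = ∑ pq ∈ C2, (g pq : ℚ) + ∑ pq ∈ R2, (g pq : ℚ) :=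
    (Finset.sum_filter_add_sum_filter_not R1 _ _).symm
  have t2 : ∑ pq ∈ R2, (g pq : ℚ) = ∑ pq ∈ C3, (g pq : ℚ) + ∑ pq ∈ R3, (g pq : ℚ) :=
    (Finset.sum_filter_add_sum_filter_not R2 _ _).symm
  have t3 : ∑ pq ∈ R3, (g pq : ℚ) = ∑ pq ∈ C4, (g pq : ℚ) + ∑ pq ∈ R4, (g pq : ℚ) :=
    (Finset.sum_filter_add_sum_filter_not R3 _ _).symm
  have t4 : ∑ pq ∈ R4, (g pq : ℚ) = ∑ pq ∈ C5, (g pq : ℚ) + ∑ pq ∈ C6, (g pq : ℚ) :=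
    (Finset.sum_filter_add_sum_filter_not R4 _ _).symm
  -- card splitting
  have u0 : C1.card + R1.card = D.card :=
    Finset.card_filter_add_card_filter_not _
  have u1 : C2.card + R2.card = R1.card :=
    Finset.card_filter_add_card_filter_not _
  have u2 : C3.card + R3.card = R2.card :=
    Finset.card_filter_add_card_filter_not _
  have u3 : C4.card + R4.card = R3.card :=
    Finset.card_filter_add_card_filter_not _
  have u4 : C5.card + C6.card = R4.card :=
    Finset.card_filter_add_card_filter_not _
  -- ====== per-cell values ======
  have hT1 : ∑ pq ∈ C1, (g pq : ℚ)
      = (C1.card : ℚ) * ((K.card : ℚ) *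
          (((c i : ℚ) * (c j : ℚ)) / (n.descFactorial 2 : ℚ))) := by
    have hval : ∀ pq ∈ C1, (g pq : ℚ) = (K.card : ℚ) *
        (((c i : ℚ) * (c j : ℚ)) / (n.descFactorial 2 : ℚ)) := by
      intro pq hpq
      rw [hC1, Finset.mem_filter] at hpq
      obtain ⟨hpqD, he1⟩ := hpq
      obtain ⟨ha1, ha2⟩ := hmemD pq hpqD
      have hgv : g pq = (K.filter fun f => f pq.1.1 = i ∧ f pq.1.2 = j).card := by
        simp only [hg]
        refine congrArg Finset.card (Finset.filter_congr fun f _ => ?_)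
        constructor
        · rintro ⟨h, _⟩; exact h
        · intro h; exact ⟨h, by rw [← he1]; exact h⟩
      have key := VarBi.cnt2_key (c := c) hij (G.ne_of_adj ha1)
      rw [hn] at key
      rw [hgv, show (K.card : ℚ) * (((c i : ℚ) * (c j : ℚ)) / (n.descFactorial 2 : ℚ))
          = ((K.card : ℚ) * ((c i : ℚ) * (c j : ℚ))) / (n.descFactorial 2 : ℚ) from by ring,
        eq_div_iff hnn2]
      exact_mod_cast congrArg (fun x : ℕ => (x : ℚ)) key
    rw [Finset.sum_congr rfl hval, Finset.sum_const, nsmul_eq_mul]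
  have hT2 : ∑ pq ∈ C2, (g pq : ℚ)
      = (C2.card : ℚ) * ((K.card : ℚ) *
          (((c i : ℚ) * ((c j).descFactorial 2 : ℚ)) / (n.descFactorial 3 : ℚ))) := by
    have hval : ∀ pq ∈ C2, (g pq : ℚ) = (K.card : ℚ) *
        (((c i : ℚ) * ((c j).descFactorial 2 : ℚ)) / (n.descFactorial 3 : ℚ)) := by
      intro pq hpq
      rw [hC2, Finset.mem_filter, hR1, Finset.mem_filter] at hpq
      obtain ⟨⟨hpqD, hne1⟩, he2⟩ := hpq
      obtain ⟨ha1, ha2⟩ := hmemD pq hpqD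
      have hd1 : pq.1.1 ≠ pq.1.2 := G.ne_of_adj ha1
      have hd3 : pq.1.2 ≠ pq.2.2 := fun hcon => hne1 (Prod.ext_iff.2 ⟨he2, hcon⟩)
      have hd2 : pq.1.1 ≠ pq.2.2 := by rw [he2]; exact G.ne_of_adj ha2
      have h3n : 3 ≤ n := by
        rw [← hn]
        have := Fintype.card_le_of_injective _ (inj3 hd1 hd2 hd3)
        simpa using this
      have hnn3 : ((n.descFactorial 3 : ℕ) : ℚ) ≠ 0 := by
        rw [Nat.cast_ne_zero, Ne, Nat.descFactorial_eq_zero_iff_lt]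
        exact Nat.not_lt.2 h3n
      have hgv : g pq
          = (K.filter fun f => f pq.1.1 = i ∧ f pq.1.2 = j ∧ f pq.2.2 = j).card := by
        simp only [hg]
        refine congrArg Finset.card (Finset.filter_congr fun f _ => ?_)
        constructor
        · rintro ⟨⟨hA, hB⟩, _, hDd⟩; exact ⟨hA, hB, hDd⟩
        · rintro ⟨hA, hB, hDd⟩; exact ⟨⟨hA, hB⟩, by rw [← he2]; exact hA, hDd⟩
      have key := VarBi.cnt3_key (c := c) hij hd1 hd2 hd3
      rw [hn, show c j * c j - c j = (c j).descFactorial 2 from (VarBi.df2_aux _).symm] at key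
      rw [hgv, show (K.card : ℚ) * (((c i : ℚ) * ((c j).descFactorial 2 : ℚ))
            / (n.descFactorial 3 : ℚ))
          = ((K.card : ℚ) * ((c i : ℚ) * ((c j).descFactorial 2 : ℚ)))
            / (n.descFactorial 3 : ℚ) from by ring,
        eq_div_iff hnn3]
      exact_mod_cast congrArg (fun x : ℕ => (x : ℚ)) key
    rw [Finset.sum_congr rfl hval, Finset.sum_const, nsmul_eq_mul]
  have hT3 : ∑ pq ∈ C3, (g pq : ℚ)
      = (C3.card : ℚ) * ((K.card : ℚ) *
          ((((c i).descFactorial 2 : ℚ) * (c j : ℚ)) / (n.descFactorial 3 : ℚ))) := by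
    have hval : ∀ pq ∈ C3, (g pq : ℚ) = (K.card : ℚ) *
        ((((c i).descFactorial 2 : ℚ) * (c j : ℚ)) / (n.descFactorial 3 : ℚ)) := by
      intro pq hpq
      rw [hC3, Finset.mem_filter, hR2, Finset.mem_filter, hR1, Finset.mem_filter] at hpq
      obtain ⟨⟨⟨hpqD, hne1⟩, hne2⟩, he3⟩ := hpq
      obtain ⟨ha1, ha2⟩ := hmemD pq hpqD
      have hd1 : pq.1.1 ≠ pq.2.1 := hne2
      have hd2 : pq.1.1 ≠ pq.1.2 := G.ne_of_adj ha1
      have hd3 : pq.2.1 ≠ pq.1.2 := by rw [he3]; exact G.ne_of_adj ha2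
      have h3n : 3 ≤ n := by
        rw [← hn]
        have := Fintype.card_le_of_injective _ (inj3 hd1 hd2 hd3)
        simpa using this
      have hnn3 : ((n.descFactorial 3 : ℕ) : ℚ) ≠ 0 := by
        rw [Nat.cast_ne_zero, Ne, Nat.descFactorial_eq_zero_iff_lt]
        exact Nat.not_lt.2 h3n
      have hgv : g pq
          = (K.filter fun f => f pq.1.1 = i ∧ f pq.2.1 = i ∧ f pq.1.2 = j).card := by
        simp only [hg]
        refine congrArg Finset.card (Finset.filter_congr fun f _ => ?_)
        constructor
        · rintro ⟨⟨hA, hB⟩, hC, _⟩; exact ⟨hA, hC, hB⟩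
        · rintro ⟨hA, hC, hB⟩; exact ⟨⟨hA, hB⟩, hC, by rw [← he3]; exact hB⟩
      have key := VarBi.cnt3'_key (c := c) hij hd1 hd2 hd3
      rw [hn, show c i * c i - c i = (c i).descFactorial 2 from (VarBi.df2_aux _).symm] at key
      rw [hgv, show (K.card : ℚ) * ((((c i).descFactorial 2 : ℚ) * (c j : ℚ))
            / (n.descFactorial 3 : ℚ))
          = ((K.card : ℚ) * (((c i).descFactorial 2 : ℚ) * (c j : ℚ)))
            / (n.descFactorial 3 : ℚ) from by ring,
        eq_div_iff hnn3]
      exact_mod_cast congrArg (fun x : ℕ => (x : ℚ)) key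
    rw [Finset.sum_congr rfl hval, Finset.sum_const, nsmul_eq_mul]
  have hT4 : ∑ pq ∈ C4, (g pq : ℚ) = 0 := by
    refine Finset.sum_eq_zero fun pq hpq => ?_
    rw [hC4, Finset.mem_filter] at hpq
    obtain ⟨_, he4⟩ := hpq
    simp only [hg]
    norm_cast
    rw [Finset.card_eq_zero, Finset.filter_eq_empty_iff]
    rintro f _ ⟨⟨hA, _⟩, _, hDd⟩
    exact hij (by rw [← hA, he4, hDd])
  have hT5 : ∑ pq ∈ C5, (g pq : ℚ) = 0 := by
    refine Finset.sum_eq_zero fun pq hpq => ?_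
    rw [hC5, Finset.mem_filter] at hpq
    obtain ⟨_, he5⟩ := hpq
    simp only [hg]
    norm_cast
    rw [Finset.card_eq_zero, Finset.filter_eq_empty_iff]
    rintro f _ ⟨⟨_, hB⟩, hC, _⟩
    exact hij (by rw [← hC, ← he5, hB])
  have hT6 : ∑ pq ∈ C6, (g pq : ℚ)
      = (C6.card : ℚ) * ((K.card : ℚ) *
          ((((c i).descFactorial 2 : ℚ) * ((c j).descFactorial 2 : ℚ))
            / (n.descFactorial 4 : ℚ))) := by
    have hval : ∀ pq ∈ C6, (g pq : ℚ) = (K.card : ℚ) *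
        ((((c i).descFactorial 2 : ℚ) * ((c j).descFactorial 2 : ℚ))
          / (n.descFactorial 4 : ℚ)) := by
      intro pq hpq
      rw [hC6, Finset.mem_filter, hR4, Finset.mem_filter, hR3, Finset.mem_filter,
        hR2, Finset.mem_filter, hR1, Finset.mem_filter] at hpq
      obtain ⟨⟨⟨⟨⟨hpqD, hne1⟩, hne2⟩, hne3⟩, hne4⟩, hne5⟩ := hpq
      obtain ⟨ha1, ha2⟩ := hmemD pq hpqD
      have hd1 : pq.1.1 ≠ pq.1.2 := G.ne_of_adj ha1
      have hd6 : pq.2.1 ≠ pq.2.2 := G.ne_of_adj ha2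
      have h4n : 4 ≤ n := by
        rw [← hn]
        have := Fintype.card_le_of_injective _ (inj4 hd1 hne2 hne4 hne5 hne3 hd6)
        simpa using this
      have hnn4 : ((n.descFactorial 4 : ℕ) : ℚ) ≠ 0 := by
        rw [Nat.cast_ne_zero, Ne, Nat.descFactorial_eq_zero_iff_lt]
        exact Nat.not_lt.2 h4n
      have hgv : g pq = (K.filter fun f =>
          f pq.1.1 = i ∧ f pq.1.2 = j ∧ f pq.2.1 = i ∧ f pq.2.2 = j).card := by
        simp only [hg]
        refine congrArg Finset.card (Finset.filter_congr fun f _ => ?_)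
        constructor
        · rintro ⟨⟨hA, hB⟩, hC, hDd⟩; exact ⟨hA, hB, hC, hDd⟩
        · rintro ⟨hA, hB, hC, hDd⟩; exact ⟨⟨hA, hB⟩, hC, hDd⟩
      have key := VarBi.cnt4_key (c := c) hij hd1 hne2 hne4 hne5 hne3 hd6
      rw [hn, show c i * c i - c i = (c i).descFactorial 2 from (VarBi.df2_aux _).symm,
        show c j * c j - c j = (c j).descFactorial 2 from (VarBi.df2_aux _).symm] at key
      rw [hgv, show (K.card : ℚ) * ((((c i).descFactorial 2 : ℚ)
              * ((c j).descFactorial 2 : ℚ)) / (n.descFactorial 4 : ℚ))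
          = ((K.card : ℚ) * (((c i).descFactorial 2 : ℚ) * ((c j).descFactorial 2 : ℚ)))
            / (n.descFactorial 4 : ℚ) from by ring,
        eq_div_iff hnn4]
      exact_mod_cast congrArg (fun x : ℕ => (x : ℚ)) key
    rw [Finset.sum_congr rfl hval, Finset.sum_const, nsmul_eq_mul]
  -- ====== cell cardinalities ======
  have hC1eq : C1 = (univ : Finset ((V × V) × (V × V))).filter
      (fun pq => G.Adj pq.1.1 pq.1.2 ∧ pq.1 = pq.2) := by
    rw [hC1, hD, hAdjP]
    ext pq
    simp only [Finset.mem_filter, Finset.mem_product, Finset.mem_univ, true_and]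
    constructor
    · rintro ⟨⟨h1, h2⟩, h3⟩; exact ⟨h1, h3⟩
    · rintro ⟨h1, h3⟩; exact ⟨⟨h1, by rw [← h3]; exact h1⟩, h3⟩
  have hC1card : C1.card = 2 * m := by
    rw [hC1eq, VarBi.cardE1, SimpleGraph.sum_degrees_eq_twice_card_edges, hm]
  have hC2eq : C2 = (univ : Finset ((V × V) × (V × V))).filter
      (fun pq => (G.Adj pq.1.1 pq.1.2 ∧ G.Adj pq.2.1 pq.2.2)
        ∧ pq.1.1 = pq.2.1 ∧ pq.1.2 ≠ pq.2.2) := by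
    rw [hC2, hR1, hD, hAdjP]
    ext pq
    simp only [Finset.mem_filter, Finset.mem_product, Finset.mem_univ, true_and, ne_eq]
    constructor
    · rintro ⟨⟨⟨h1, h2⟩, hne⟩, he⟩
      exact ⟨⟨h1, h2⟩, he, fun hcon => hne (Prod.ext_iff.2 ⟨he, hcon⟩)⟩
    · rintro ⟨⟨h1, h2⟩, he, hne⟩
      exact ⟨⟨⟨h1, h2⟩, fun hcon => hne (by rw [hcon])⟩, he⟩
  have hC2card : C2.card = 2 * p3 := by
    rw [hC2eq, VarBi.cardE2, hp3, Finset.mul_sum]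
    exact Finset.sum_congr rfl fun u _ => (VarBi.nat_sq_aux _).1
  have hC3eq : C3 = (univ : Finset ((V × V) × (V × V))).filter
      (fun pq => (G.Adj pq.1.1 pq.1.2 ∧ G.Adj pq.2.1 pq.2.2)
        ∧ pq.1.1 ≠ pq.2.1 ∧ pq.1.2 = pq.2.2) := by
    rw [hC3, hR2, hR1, hD, hAdjP]
    ext pq
    simp only [Finset.mem_filter, Finset.mem_product, Finset.mem_univ, true_and, ne_eq]
    constructor
    · rintro ⟨⟨⟨⟨h1, h2⟩, _⟩, hne2⟩, he3⟩
      exact ⟨⟨h1, h2⟩, hne2, he3⟩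
    · rintro ⟨⟨h1, h2⟩, hne2, he3⟩
      exact ⟨⟨⟨⟨h1, h2⟩, fun hcon => hne2 (by rw [hcon])⟩, hne2⟩, he3⟩
  have hC3card : C3.card = 2 * p3 := by
    rw [hC3eq, VarBi.cardE3, hp3, Finset.mul_sum]
    exact Finset.sum_congr rfl fun u _ => (VarBi.nat_sq_aux _).1
  have hC4eq : C4 = (univ : Finset ((V × V) × (V × V))).filter
      (fun pq => (G.Adj pq.1.1 pq.1.2 ∧ G.Adj pq.2.1 pq.2.2) ∧ pq.1.1 = pq.2.2) := by
    rw [hC4, hR3, hR2, hR1, hD, hAdjP]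
    ext pq
    simp only [Finset.mem_filter, Finset.mem_product, Finset.mem_univ, true_and, ne_eq]
    constructor
    · rintro ⟨⟨⟨⟨⟨h1, h2⟩, _⟩, _⟩, _⟩, he4⟩
      exact ⟨⟨h1, h2⟩, he4⟩
    · rintro ⟨⟨h1, h2⟩, he4⟩
      refine ⟨⟨⟨⟨⟨h1, h2⟩, fun hcon => G.ne_of_adj h1 (by rw [he4, hcon])⟩,
        fun hcon => G.ne_of_adj h2 (by rw [← hcon]; exact he4)⟩,
        fun hcon => G.ne_of_adj h1 (by rw [he4, ← hcon])⟩, he4⟩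
  have hC4card : C4.card = 2 * p3 + 2 * m := by
    rw [hC4eq, VarBi.cardE4]
    calc ∑ u, G.degree u * G.degree u
        = ∑ u, (2 * (G.degree u).choose 2 + G.degree u) :=
          Finset.sum_congr rfl fun u _ => (VarBi.nat_sq_aux _).2
      _ = 2 * p3 + 2 * m := by
          rw [Finset.sum_add_distrib, ← Finset.mul_sum, ← hp3,
            SimpleGraph.sum_degrees_eq_twice_card_edges, hm]
  have hC5eq : C5 = (univ : Finset ((V × V) × (V × V))).filter
      (fun pq => (G.Adj pq.1.1 pq.1.2 ∧ G.Adj pq.2.1 pq.2.2)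
        ∧ pq.1.2 = pq.2.1 ∧ pq.1.1 ≠ pq.2.2) := by
    rw [hC5, hR4, hR3, hR2, hR1, hD, hAdjP]
    ext pq
    simp only [Finset.mem_filter, Finset.mem_product, Finset.mem_univ, true_and, ne_eq]
    constructor
    · rintro ⟨⟨⟨⟨⟨⟨h1, h2⟩, _⟩, _⟩, _⟩, hne4⟩, he5⟩
      exact ⟨⟨h1, h2⟩, he5, hne4⟩
    · rintro ⟨⟨h1, h2⟩, he5, hne4⟩
      refine ⟨⟨⟨⟨⟨⟨h1, h2⟩, fun hcon => G.ne_of_adj h1 (by rw [he5, ← hcon])⟩,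
        fun hcon => G.ne_of_adj h1 (by rw [he5, ← hcon])⟩,
        fun hcon => G.ne_of_adj h2 (by rw [← he5]; exact hcon)⟩, hne4⟩, he5⟩
  have hC5card : C5.card = 2 * p3 := by
    rw [hC5eq, VarBi.cardE5, hp3, Finset.mul_sum]
    exact Finset.sum_congr rfl fun u _ => (VarBi.nat_sq_aux _).1
  have hDcard : D.card = 8 * m.choose 2 + 4 * m := by
    rw [hD, Finset.card_product, hAdjcard]
    calc 2 * m * (2 * m) = 4 * (m * m) := by ring
      _ = 4 * (2 * m.choose 2 + m) := by rw [(VarBi.nat_sq_aux m).2]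
      _ = 8 * m.choose 2 + 4 * m := by ring
  have hg6Q : (C6.card : ℚ) = 8 * (m.choose 2 : ℚ) - 8 * (p3 : ℚ) := by
    have q0 : (C1.card : ℚ) + R1.card = D.card := by exact_mod_cast u0
    have q1 : (C2.card : ℚ) + R2.card = R1.card := by exact_mod_cast u1
    have q2 : (C3.card : ℚ) + R3.card = R2.card := by exact_mod_cast u2
    have q3 : (C4.card : ℚ) + R4.card = R3.card := by exact_mod_cast u3
    have q4 : (C5.card : ℚ) + C6.card = R4.card := by exact_mod_cast u4
    have v1 : (C1.card : ℚ) = 2 * m := by exact_mod_cast hC1card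
    have v2 : (C2.card : ℚ) = 2 * p3 := by exact_mod_cast hC2card
    have v3 : (C3.card : ℚ) = 2 * p3 := by exact_mod_cast hC3card
    have v4 : (C4.card : ℚ) = 2 * p3 + 2 * m := by exact_mod_cast hC4card
    have v5 : (C5.card : ℚ) = 2 * p3 := by exact_mod_cast hC5card
    have v0 : (D.card : ℚ) = 8 * (m.choose 2 : ℚ) + 4 * m := by exact_mod_cast hDcard
    linarith
  -- ====== assembly ======
  have hcast2 : (∑ f ∈ K, (biEdges V G s i j f : ℚ) ^ 2) = ∑ pq ∈ D, (g pq : ℚ) := by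
    have h := congrArg (fun x : ℕ => (x : ℚ)) hS2swap
    push_cast at h
    exact h
  have hS2Q : (∑ f ∈ K, (biEdges V G s i j f : ℚ) ^ 2)
      = (K.card : ℚ) * (2 * m * (((c i : ℚ) * (c j : ℚ)) / (n.descFactorial 2 : ℚ))
        + 2 * p3 * (((c i : ℚ) * ((c j).descFactorial 2 : ℚ)) / (n.descFactorial 3 : ℚ))
        + 2 * p3 * ((((c i).descFactorial 2 : ℚ) * (c j : ℚ)) / (n.descFactorial 3 : ℚ))
        + (C6.card : ℚ) * ((((c i).descFactorial 2 : ℚ) * ((c j).descFactorial 2 : ℚ))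
            / (n.descFactorial 4 : ℚ))) := by
    rw [hcast2, t0, t1, t2, t3, t4, hT1, hT2, hT3, hT4, hT5, hT6,
      hC1card, hC2card, hC3card]
    push_cast
    ring
  rw [hS1Q, hS2Q, mul_div_cancel_left₀ _ hNQ, mul_div_cancel_left₀ _ hNQ, hg6Q]
  ring
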